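/- Let N ≥ 1, h : {1,…,N} → ℝ, a : {1,…,N} → ℝ with a_j ≥ 0 for all j, and fix k. Set D := Σ_{j≠k} h_j² a_j. Then the map t ↦ log(1 + h_k² t/(1 + D)) has derivative h_k²/(1 + h_k² a_k + D) at t = a_k, and the map t ↦ log(1 + h_k² t + D) also has derivative h_k²/(1 + h_k² a_k + D) at t = a_k. Hence the partial derivative of agent k's MAC reward with respect to its own power a_k equals the corresponding partial derivative of the potential J, both being h_k²/(1 + Σ_{j=1}^N h_j² a_j). -/
import Mathlib


open Finset

/-- Gradient matching in the MAC game: the derivative of agent `k`'s rate reward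
with respect to its own power equals that of the potential's rate term, both being
`h_k²/(1 + ∑ j, h_j² a_j)`. -/
theorem mac_potential_gradient_matching (N : ℕ) (hN : 1 ≤ N)
    (h a : Fin N → ℝ) (ha : ∀ j, 0 ≤ a j) (k : Fin N) :
    HasDerivAt
        (fun t : ℝ => Real.log
          (1 + h k ^ 2 * t / (1 + ∑ j ∈ Finset.univ.erase k, h j ^ 2 * a j)))
        (h k ^ 2 / (1 + h k ^ 2 * a k + ∑ j ∈ Finset.univ.erase k, h j ^ 2 * a j))
        (a k) ∧
    HasDerivAt
        (fun t : ℝ => Real.log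
          (1 + h k ^ 2 * t + ∑ j ∈ Finset.univ.erase k, h j ^ 2 * a j))
        (h k ^ 2 / (1 + h k ^ 2 * a k + ∑ j ∈ Finset.univ.erase k, h j ^ 2 * a j))
        (a k) ∧
    h k ^ 2 / (1 + h k ^ 2 * a k + ∑ j ∈ Finset.univ.erase k, h j ^ 2 * a j)
      = h k ^ 2 / (1 + ∑ j, h j ^ 2 * a j) := by
  set D : ℝ := ∑ j ∈ Finset.univ.erase k, h j ^ 2 * a j with hD
  have hD0 : 0 ≤ D := Finset.sum_nonneg fun j _ => mul_nonneg (sq_nonneg _) (ha j)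
  have hD1 : (0:ℝ) < 1 + D := by linarith
  have hck : 0 ≤ h k ^ 2 * a k := mul_nonneg (sq_nonneg _) (ha k)
  have htot : (0:ℝ) < 1 + h k ^ 2 * a k + D := by linarith
  have hsum : (1:ℝ) + ∑ j, h j ^ 2 * a j = 1 + h k ^ 2 * a k + D := by
    rw [hD, ← Finset.add_sum_erase _ _ (Finset.mem_univ k)]; ring
  refine ⟨?_, ?_, ?_⟩
  · have hin : HasDerivAt (fun t : ℝ => 1 + h k ^ 2 * t / (1 + D))
        (h k ^ 2 / (1 + D)) (a k) := by
      have := ((hasDerivAt_id (a k)).const_mul (h k ^ 2)).div_const (1 + D)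
      simpa [mul_comm] using this.const_add 1
    have hpos : 0 < 1 + h k ^ 2 * a k / (1 + D) := by
      have : 0 ≤ h k ^ 2 * a k / (1 + D) := div_nonneg hck hD1.le
      linarith
    have := hin.log hpos.ne'
    convert this using 1
    rw [div_div]
    congr 1
    field_simp
    ring
  · have hin : HasDerivAt (fun t : ℝ => 1 + h k ^ 2 * t + D)
        (h k ^ 2) (a k) := by
      have := ((hasDerivAt_id (a k)).const_mul (h k ^ 2)).const_add (1:ℝ)
      simpa [mul_comm] using this.add_const D
    have := hin.log htot.ne'
    simpa using this
  · rw [hsum]
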